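/- Let G be a connected claw-free cubic graph with bridge set B(G). If a connected component of G - B(G) is a cycle, then it is a triangle (a cycle of length 3). -/

import Mathlib

open SimpleGraph

/-- A graph is claw-free if it has no induced subgraph isomorphic to `K_{1,3}`. -/
def IsClawFree {V : Type*} (G : SimpleGraph V) : Prop :=
  ¬ ∃ v a b c : V, a ≠ b ∧ a ≠ c ∧ b ≠ c ∧
    G.Adj v a ∧ G.Adj v b ∧ G.Adj v c ∧ ¬ G.Adj a b ∧ ¬ G.Adj a c ∧ ¬ G.Adj b c

/-- `G - B(G)`: the graph obtained from `G` by deleting all of its bridges. -/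
def bridgeFree {V : Type*} (G : SimpleGraph V) : SimpleGraph V :=
  G.deleteEdges {e | G.IsBridge e}

lemma triangle_not_bridge {V : Type*} {G : SimpleGraph V} {x y z : V}
    (hxy : G.Adj x y) (hyz : G.Adj y z) (hzx : G.Adj z x) : ¬ G.IsBridge s(x, y) := by
  rw [isBridge_iff_adj_and_forall_cycle_notMem]
  push_neg
  have hxz : x ≠ z := hzx.ne'
  refine ⟨x, Walk.cons hxy (Walk.cons hyz (Walk.cons hzx Walk.nil)), ?_, ?_⟩
  · simp [Walk.isCycle_def, Walk.isTrail_def, hxy.ne, hyz.ne, hzx.ne, hxz,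
      Sym2.eq_iff, hxy.ne', hyz.ne', hzx.ne']
  · simp
  exact hxy

lemma bridgeFree_adj {V : Type*} {G : SimpleGraph V} {x y : V} :
    (bridgeFree G).Adj x y ↔ G.Adj x y ∧ ¬ G.IsBridge s(x, y) := by
  simp [bridgeFree, deleteEdges_adj]

/-- In a connected claw-free cubic graph `G`, if a connected component of `G - B(G)` is a
cycle (i.e. all of its vertices have degree `2` in the component), then it is a triangle
(it has exactly `3` vertices). -/
theorem cycle_component_is_triangle {V : Type*} [Fintype V] [DecidableEq V]
    (G : SimpleGraph V) [DecidableRel G.Adj]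
    (hconn : G.Connected) (hcubic : ∀ v : V, G.degree v = 3) (hclawfree : IsClawFree G)
    (v : V)
    (hcycle : ∀ w ∈ ((bridgeFree G).connectedComponentMk v).supp,
      ((bridgeFree G).neighborSet w).ncard = 2) :
    ((bridgeFree G).connectedComponentMk v).supp.ncard = 3 := by
  classical
  set H := bridgeFree G with hH
  have hvsupp : v ∈ (H.connectedComponentMk v).supp := by
    simp [ConnectedComponent.mem_supp_iff]
  have hnv : (H.neighborSet v).ncard = 2 := hcycle v hvsupp
  -- H is a subgraph of G
  have hsub : ∀ {x y : V}, H.Adj x y → G.Adj x y := fun h => (bridgeFree_adj.mp h).1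
  have hGnv : (G.neighborSet v).ncard = 3 := by
    rw [Set.ncard_eq_toFinset_card', ← neighborFinset_def]
    exact hcubic v
  have hss : H.neighborSet v ⊆ G.neighborSet v := fun x hx => hsub hx
  -- get the two H-neighbors a b and the bridge neighbor c
  obtain ⟨a, b, hab, hNv⟩ := Set.ncard_eq_two.mp hnv
  have hne : H.neighborSet v ≠ G.neighborSet v := by
    intro h; rw [h, hGnv] at hnv; omega
  obtain ⟨c, hcG, hcH⟩ := Set.exists_of_ssubset ⟨hss, fun h => hne (Set.Subset.antisymm hss h)⟩
  have hHva : H.Adj v a := by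
    have : a ∈ H.neighborSet v := by rw [hNv]; simp
    exact this
  have hHvb : H.Adj v b := by
    have : b ∈ H.neighborSet v := by rw [hNv]; simp
    exact this
  have hGva : G.Adj v a := hsub hHva
  have hGvb : G.Adj v b := hsub hHvb
  have hGvc : G.Adj v c := hcG
  have hac : a ≠ c := by rintro rfl; exact hcH hHva
  have hbc : b ≠ c := by rintro rfl; exact hcH hHvb
  have hbridge : G.IsBridge s(v, c) := by
    by_contra h
    exact hcH (bridgeFree_adj.mpr ⟨hGvc, h⟩)
  -- c not adjacent to a or b
  have hnac : ¬ G.Adj a c := fun h =>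
    (triangle_not_bridge hGvc h.symm hGva.symm) hbridge
  have hnbc : ¬ G.Adj b c := fun h =>
    (triangle_not_bridge hGvc h.symm hGvb.symm) hbridge
  -- claw-freeness forces a ~ b
  have hGab : G.Adj a b := by
    by_contra hnab
    exact hclawfree ⟨v, a, b, c, hab, hac, hbc, hGva, hGvb, hGvc, hnab, hnac, hnbc⟩
  have hHab : H.Adj a b := by
    refine bridgeFree_adj.mpr ⟨hGab, triangle_not_bridge hGab hGvb.symm hGva⟩
  -- a and b are in the component
  have hasupp : a ∈ (H.connectedComponentMk v).supp := by
    simp [ConnectedComponent.mem_supp_iff]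
    exact hHva.symm.reachable
  have hbsupp : b ∈ (H.connectedComponentMk v).supp := by
    simp [ConnectedComponent.mem_supp_iff]
    exact hHvb.symm.reachable
  have hva : v ≠ a := hGva.ne
  have hvb : v ≠ b := hGvb.ne
  -- neighbor sets are exactly the pairs
  have hNa : H.neighborSet a = {v, b} := by
    refine (Set.eq_of_subset_of_ncard_le ?_ ?_ (Set.toFinite _)).symm
    · rintro x (rfl | rfl)
      · exact hHva.symm
      · exact hHab
    · rw [hcycle a hasupp, Set.ncard_pair hvb]
  have hNb : H.neighborSet b = {v, a} := by
    refine (Set.eq_of_subset_of_ncard_le ?_ ?_ (Set.toFinite _)).symm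
    · rintro x (rfl | rfl)
      · exact hHvb.symm
      · exact hHab.symm
    · rw [hcycle b hbsupp, Set.ncard_pair hva]
  -- the support is exactly {v, a, b}
  have hclosed : ∀ x ∈ ({v, a, b} : Set V), ∀ y, H.Adj x y → y ∈ ({v, a, b} : Set V) := by
    rintro x (rfl | rfl | rfl) y hxy
    · have : y ∈ H.neighborSet x := hxy
      rw [hNv] at this
      rcases this with rfl | rfl
      · right; left; rfl
      · right; right; rfl
    · have : y ∈ H.neighborSet x := hxy
      rw [hNa] at this
      rcases this with rfl | rfl
      · left; rfl
      · right; right; rfl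
    · have : y ∈ H.neighborSet x := hxy
      rw [hNb] at this
      rcases this with rfl | rfl
      · left; rfl
      · right; left; rfl
  have hsupp : (H.connectedComponentMk v).supp = {v, a, b} := by
    apply Set.eq_of_subset_of_subset
    · intro w hw
      rw [ConnectedComponent.mem_supp_iff, ConnectedComponent.eq] at hw
      obtain ⟨p⟩ := hw
      have aux : ∀ (x y : V) (q : H.Walk x y), x ∈ ({v, a, b} : Set V) →
          y ∈ ({v, a, b} : Set V) := by
        intro x y q
        induction q with
        | nil => exact id
        | cons h q ih => exact fun hx => ih (hclosed _ hx _ h)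
      exact aux v w p.reverse (by left; rfl)
    · rintro x (rfl | rfl | rfl)
      · exact hvsupp
      · exact hasupp
      · exact hbsupp
  rw [hsupp]
  rw [Set.ncard_eq_three]
  exact ⟨v, a, b, hva, hvb, hab, rfl⟩
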